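/- Let T, p, q, P, Q be as in the setup, and suppose P and Q are invertible (p_n > 0 and q_m > 0) and cap(T, P, Q) > 0. Then T and T* both map positive-definite matrices to positive-definite matrices: for every positive-definite X ∈ Mat_n(ℂ), T(X) is positive definite, and for every positive-definite Y ∈ Mat_m(ℂ), T*(Y) is positive definite. -/

import Mathlib

open Matrix BigOperators ComplexOrder

noncomputable section

/-- `η_j` : the projection onto the first `j` coordinates, as a `j × k` matrix. -/
def proj (j k : ℕ) : Matrix (Fin j) (Fin k) ℂ :=
  Matrix.of fun i l => if (i : ℕ) = (l : ℕ) then 1 else 0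

/-- `Δa_j = a_j − a_{j+1}`, with the convention `a_{k+1} = 0`. -/
def delta {k : ℕ} (a : Fin k → ℝ) (j : Fin k) : ℝ :=
  a j - (if h : (j : ℕ) + 1 < k then a ⟨(j : ℕ) + 1, h⟩ else 0)

/-- Integer version of `delta`. -/
def deltaNat {k : ℕ} (a : Fin k → ℕ) (j : Fin k) : ℕ :=
  a j - (if h : (j : ℕ) + 1 < k then a ⟨(j : ℕ) + 1, h⟩ else 0)

/-- The relative determinant `det(diag a, X) = ∏_j det(η_j X η_j†)^{Δa_j}` (real exponents,
with the convention `0 ^ 0 = 1`). -/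
def relDet {k : ℕ} (a : Fin k → ℝ) (X : Matrix (Fin k) (Fin k) ℂ) : ℝ :=
  ∏ j : Fin k,
    ((proj ((j : ℕ) + 1) k * X * (proj ((j : ℕ) + 1) k)ᴴ).det.re) ^ (delta a j)

/-- Complex relative determinant for integral weights. -/
def relDetC {k : ℕ} (a : Fin k → ℕ) (X : Matrix (Fin k) (Fin k) ℂ) : ℂ :=
  ∏ j : Fin k,
    ((proj ((j : ℕ) + 1) k * X * (proj ((j : ℕ) + 1) k)ᴴ).det) ^ (deltaNat a j)

/-- The completely positive map `T(X) = Σ A_i X A_i†` with Kraus operators `A i`. -/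
def cpMap {ι κ : Type*} [Fintype ι] {r : ℕ} (A : Fin r → Matrix κ ι ℂ)
    (X : Matrix ι ι ℂ) : Matrix κ κ ℂ :=
  ∑ i, A i * X * (A i)ᴴ

/-- The dual completely positive map `T*(Y) = Σ A_i† Y A_i`. -/
def cpDual {ι κ : Type*} [Fintype κ] {r : ℕ} (A : Fin r → Matrix κ ι ℂ)
    (Y : Matrix κ κ ℂ) : Matrix ι ι ℂ :=
  ∑ i, (A i)ᴴ * Y * A i

/-- Frobenius norm `‖A‖ = √(Tr A Aᴴ)`. -/
def frob {ι κ : Type*} [Fintype ι] [Fintype κ] (A : Matrix ι κ ℂ) : ℝ :=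
  Real.sqrt (A * Aᴴ).trace.re

/-- Upper triangular predicate. -/
def UT {k : ℕ} (g : Matrix (Fin k) (Fin k) ℂ) : Prop :=
  ∀ i j : Fin k, j < i → g i j = 0

/-- Capacity with specified marginals:
`cap(T,P,Q) = inf over invertible upper triangular h of det(Q, T(hPh†)) / det(P, h†h)`. -/
def cap {n m r : ℕ} (A : Fin r → Matrix (Fin m) (Fin n) ℂ)
    (p : Fin n → ℝ) (q : Fin m → ℝ) : ℝ :=
  sInf { x : ℝ | ∃ h : Matrix (Fin n) (Fin n) ℂ, IsUnit h.det ∧ UT h ∧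
    x = relDet q (cpMap A (h * Matrix.diagonal (fun j => (p j : ℂ)) * hᴴ)) /
        relDet p (hᴴ * h) }

/-- Span of the first `i` standard basis vectors of `ℂ^k`. -/
def coordSub (k i : ℕ) : Submodule ℂ (Fin k → ℂ) where
  carrier := { x | ∀ l : Fin k, i ≤ (l : ℕ) → x l = 0 }
  add_mem' := by intro a b ha hb l hl; simp [ha l hl, hb l hl]
  zero_mem' := by intro l _; rfl
  smul_mem' := by intro c x hx l hl; simp [hx l hl]

/-- `(L, R)` is a `T`-independent pair: `A_i R ⊥ L` for all `i`. -/
def TIndep {n m r : ℕ} (A : Fin r → Matrix (Fin m) (Fin n) ℂ)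
    (L : Submodule ℂ (Fin m → ℂ)) (R : Submodule ℂ (Fin n → ℂ)) : Prop :=
  ∀ i : Fin r, ∀ x ∈ R, ∀ y ∈ L, star y ⬝ᵥ (A i).mulVec x = 0

/-- `(P,Q)`-rank-nondecreasingness. -/
def rankNonDec {n m r : ℕ} (A : Fin r → Matrix (Fin m) (Fin n) ℂ)
    (p : Fin n → ℝ) (q : Fin m → ℝ) : Prop :=
  ∀ L : Submodule ℂ (Fin m → ℂ), ∀ R : Submodule ℂ (Fin n → ℂ), TIndep A L R →
    (∑ i : Fin m, delta q i * (Module.finrank ℂ ↥(coordSub m ((i : ℕ) + 1) ⊓ L) : ℝ)) +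
      (∑ j : Fin n, delta p j * (Module.finrank ℂ ↥(coordSub n ((j : ℕ) + 1) ⊓ R) : ℝ))
      ≤ ∑ j, p j

/-- `λ'_{i+1}`: number of parts of `lam` that are `> i` (0-indexed conjugate partition). -/
def conj' {k : ℕ} (lam : Fin k → ℕ) (i : ℕ) : ℕ :=
  (Finset.univ.filter fun j : Fin k => i < lam j).card

lemma conj'_le {k : ℕ} (lam : Fin k → ℕ) (i : ℕ) : conj' lam i ≤ k := by
  classical
  calc conj' lam i ≤ Finset.univ.card := Finset.card_filter_le _ _
    _ = k := by simp

/-- Index set for the blocks of `G_λ`; it has cardinality `Σ_i λ'_i = Σ_j λ_j`. -/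
abbrev lamIdx {k : ℕ} (lam : Fin k → ℕ) : Type :=
  Σ i : Fin (Finset.univ.sup lam), Fin (conj' lam (i : ℕ))

/-- The gadget map `G_λ(X) = ⊕_{i=1}^{λ_1} η_{λ'_i} X η_{λ'_i}†`. -/
def Gmap {k : ℕ} (lam : Fin k → ℕ) (X : Matrix (Fin k) (Fin k) ℂ) :
    Matrix (lamIdx lam) (lamIdx lam) ℂ := fun s t =>
  if s.1 = t.1 then
    X (Fin.castLE (conj'_le lam (s.1 : ℕ)) s.2) (Fin.castLE (conj'_le lam (t.1 : ℕ)) t.2)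
  else 0

/-- The adjoint `G_λ*` of the gadget map with respect to the trace inner product. -/
def GmapAdj {k : ℕ} (lam : Fin k → ℕ) (Y : Matrix (lamIdx lam) (lamIdx lam) ℂ) :
    Matrix (Fin k) (Fin k) ℂ := fun a b =>
  ∑ i : Fin (Finset.univ.sup lam),
    if h : (a : ℕ) < conj' lam (i : ℕ) ∧ (b : ℕ) < conj' lam (i : ℕ) then
      Y ⟨i, ⟨(a : ℕ), h.1⟩⟩ ⟨i, ⟨(b : ℕ), h.2⟩⟩
    else 0

/-- The reduction `trun_{P,Q} T = G_q ∘ T ∘ G_p*`. -/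
def trun {n m r : ℕ} (A : Fin r → Matrix (Fin m) (Fin n) ℂ) (p : Fin n → ℕ) (q : Fin m → ℕ)
    (X : Matrix (lamIdx p) (lamIdx p) ℂ) : Matrix (lamIdx q) (lamIdx q) ℂ :=
  Gmap q (cpMap A (GmapAdj p X))

/-- The dual of the reduction: `(trun_{P,Q} T)* = G_p ∘ T* ∘ G_q*`. -/
def trunDual {n m r : ℕ} (A : Fin r → Matrix (Fin m) (Fin n) ℂ) (p : Fin n → ℕ) (q : Fin m → ℕ)
    (Y : Matrix (lamIdx q) (lamIdx q) ℂ) : Matrix (lamIdx p) (lamIdx p) ℂ :=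
  Gmap p (cpDual A (GmapAdj q Y))

/-- Shannon entropy with convention `0 · log 0 = 0` (note `Real.log 0 = 0`). -/
def entropy {k : ℕ} (p : Fin k → ℝ) : ℝ := -∑ j, p j * Real.log (p j)

/-- The distance-to-target measure `ds_{P,Q}(T)`. -/
def ds {n m r : ℕ} (A : Fin r → Matrix (Fin m) (Fin n) ℂ)
    (p : Fin n → ℝ) (q : Fin m → ℝ) : ℝ :=
  (∑ j : Fin n, delta p j *
      (frob (proj ((j : ℕ) + 1) n *
        (cpDual A (Matrix.diagonal fun i => (q i : ℂ)) - 1) * (proj ((j : ℕ) + 1) n)ᴴ)) ^ 2) +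
    ∑ i : Fin m, delta q i *
      (frob (proj ((i : ℕ) + 1) m *
        (cpMap A (Matrix.diagonal fun j => (p j : ℂ)) - 1) * (proj ((i : ℕ) + 1) m)ᴴ)) ^ 2

/-- `(u_1,…,u_n)` can be approximately put in `Q`-isotropic position with respect to `p`. -/
def approxIso {m n : ℕ} (u : Fin n → Fin m → ℂ) (p : Fin n → ℝ)
    (Q : Matrix (Fin m) (Fin m) ℂ) : Prop :=
  ∀ ε : ℝ, 0 < ε → ∃ B : Matrix (Fin m) (Fin m) ℂ, IsUnit B.det ∧
    frob ((∑ i : Fin n,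
      (((p i / ∑ a, Complex.normSq (B.mulVec (u i) a)) : ℝ) : ℂ) •
        Matrix.vecMulVec (B.mulVec (u i)) (star (B.mulVec (u i)))) - Q) ≤ ε

namespace ProofAux

open Finset Matrix

lemma proj_mul {s k : ℕ} (hs : s ≤ k) {κ : Type*} [Fintype κ] (M : Matrix (Fin k) κ ℂ) :
    proj s k * M = M.submatrix (Fin.castLE hs) id := by
  ext a c
  rw [Matrix.mul_apply, Finset.sum_eq_single (Fin.castLE hs a)]
  · simp [proj]
  · intro b _ hb
    have hv : ¬ ((a : ℕ) = (b : ℕ)) := fun h => hb (Fin.ext h.symm)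
    simp [proj, hv]
  · simp

lemma mul_projH {s k : ℕ} (hs : s ≤ k) {κ : Type*} [Fintype κ] (M : Matrix κ (Fin k) ℂ) :
    M * (proj s k)ᴴ = M.submatrix id (Fin.castLE hs) := by
  ext c b
  rw [Matrix.mul_apply, Finset.sum_eq_single (Fin.castLE hs b)]
  · simp [proj, Matrix.conjTranspose_apply]
  · intro d _ hd
    have hv : ¬ ((b : ℕ) = (d : ℕ)) := fun h => hd (Fin.ext h.symm)
    simp [proj, Matrix.conjTranspose_apply, hv]
  · simp

lemma compress {s k : ℕ} (hs : s ≤ k) (X : Matrix (Fin k) (Fin k) ℂ) :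
    proj s k * X * (proj s k)ᴴ = X.submatrix (Fin.castLE hs) (Fin.castLE hs) := by
  rw [proj_mul hs, mul_projH hs]
  rfl

lemma detRe_nonneg {k : ℕ} {X : Matrix (Fin k) (Fin k) ℂ} (hX : X.PosSemidef) :
    0 ≤ X.det.re := by
  have h2 : X.det = ((∏ i, hX.isHermitian.eigenvalues i : ℝ) : ℂ) := by
    rw [hX.isHermitian.det_eq_prod_eigenvalues]; push_cast; rfl
  rw [h2, Complex.ofReal_re]
  exact Finset.prod_nonneg fun i _ => hX.eigenvalues_nonneg i

lemma relDet_nonneg {k : ℕ} (a : Fin k → ℝ) {X : Matrix (Fin k) (Fin k) ℂ}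
    (hX : X.PosSemidef) : 0 ≤ relDet a X :=
  Finset.prod_nonneg fun j _ =>
    Real.rpow_nonneg (detRe_nonneg (hX.mul_mul_conjTranspose_same _)) _

lemma cpMap_psd {n m r : ℕ} (A : Fin r → Matrix (Fin m) (Fin n) ℂ)
    {X : Matrix (Fin n) (Fin n) ℂ} (hX : X.PosSemidef) : (cpMap A X).PosSemidef := by
  unfold cpMap
  refine Finset.sum_induction _ _ (fun a b ha hb => ha.add hb) Matrix.PosSemidef.zero ?_
  exact fun i _ => hX.mul_mul_conjTranspose_same (A i)

lemma diag_psd {k : ℕ} (d : Fin k → ℝ) (hd : ∀ j, 0 ≤ d j) :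
    (Matrix.diagonal fun j => (d j : ℂ)).PosSemidef :=
  Matrix.posSemidef_diagonal_iff.mpr fun j => Complex.zero_le_real.mpr (hd j)

lemma delta_nonneg {k : ℕ} {a : Fin k → ℝ} (ha : Antitone a) (ha0 : ∀ j, 0 ≤ a j)
    (j : Fin k) : 0 ≤ delta a j := by
  unfold delta
  split
  · rename_i h
    have : a j ≥ a ⟨(j : ℕ) + 1, h⟩ := ha (by simp [Fin.le_def])
    linarith
  · simpa using ha0 j

/-- every element of the capacity set is nonnegative -/
lemma capSet_nonneg {n m r : ℕ} (A : Fin r → Matrix (Fin m) (Fin n) ℂ)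
    {p : Fin n → ℝ} {q : Fin m → ℝ} (hp0 : ∀ j, 0 ≤ p j) :
    ∀ x ∈ { x : ℝ | ∃ h : Matrix (Fin n) (Fin n) ℂ, IsUnit h.det ∧ UT h ∧
      x = relDet q (cpMap A (h * Matrix.diagonal (fun j => (p j : ℂ)) * hᴴ)) /
          relDet p (hᴴ * h) }, 0 ≤ x := by
  rintro x ⟨h, -, -, rfl⟩
  apply div_nonneg
  · exact relDet_nonneg _ (cpMap_psd A ((diag_psd p hp0).mul_mul_conjTranspose_same h))
  · exact relDet_nonneg _ (Matrix.posSemidef_conjTranspose_mul_self h)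

lemma proj_self (k : ℕ) : proj k k = 1 := by
  ext i l
  simp [proj, Matrix.one_apply, Fin.ext_iff]

lemma compress_det_zero {k : ℕ} {M : Matrix (Fin k) (Fin k) ℂ} {y : Fin k → ℂ} (hy : y ≠ 0)
    (hMy : M *ᵥ y = 0) {s : ℕ} (hs : s = k) : (proj s k * M * (proj s k)ᴴ).det = 0 := by
  subst hs
  rw [proj_self]
  simp only [Matrix.conjTranspose_one, Matrix.one_mul, Matrix.mul_one]
  exact Matrix.exists_mulVec_eq_zero_iff.mp ⟨y, hy, hMy⟩

lemma quad_form (k l : ℕ) (B : Matrix (Fin k) (Fin l) ℂ) (X : Matrix (Fin l) (Fin l) ℂ)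
    (y : Fin k → ℂ) :
    star y ⬝ᵥ (B * X * Bᴴ) *ᵥ y = star (Bᴴ *ᵥ y) ⬝ᵥ X *ᵥ (Bᴴ *ᵥ y) := by
  rw [Matrix.star_mulVec, Matrix.conjTranspose_conjTranspose, ← Matrix.mulVec_mulVec,
    ← Matrix.mulVec_mulVec, Matrix.dotProduct_mulVec]

/-- determinant (real part) of leading minors of `hᴴ * h` for upper triangular `h`. -/
lemma minor_det_re {k s : ℕ} (hs : s ≤ k) {g : Matrix (Fin k) (Fin k) ℂ} (hg : UT g) :
    (proj s k * (gᴴ * g) * (proj s k)ᴴ).det.re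
      = ∏ i : Fin s, Complex.normSq (g (Fin.castLE hs i) (Fin.castLE hs i)) := by
  have hblock : proj s k * (gᴴ * g) * (proj s k)ᴴ
      = (g.submatrix (Fin.castLE hs) (Fin.castLE hs))ᴴ
        * g.submatrix (Fin.castLE hs) (Fin.castLE hs) := by
    rw [compress hs]
    ext a b
    rw [Matrix.mul_apply]
    simp only [Matrix.submatrix_apply, Matrix.mul_apply, Matrix.conjTranspose_apply]
    symm
    rw [show (∑ d : Fin s, star (g (Fin.castLE hs d) (Fin.castLE hs a))
          * g (Fin.castLE hs d) (Fin.castLE hs b))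
        = ∑ d ∈ Finset.univ.map (Fin.castLEEmb hs),
            star (g d (Fin.castLE hs a)) * g d (Fin.castLE hs b) from by
      rw [Finset.sum_map]; rfl]
    apply Finset.sum_subset (Finset.subset_univ _)
    intro d _ hd
    have hds : ¬ ((d : ℕ) < s) := by
      intro hlt
      exact hd (Finset.mem_map.mpr ⟨⟨(d : ℕ), hlt⟩, Finset.mem_univ _, Fin.ext rfl⟩)
    have : g d (Fin.castLE hs a) = 0 := hg d _ (by
      simp only [Fin.lt_def, Fin.coe_castLE]
      omega)
    simp [this]
  rw [hblock, Matrix.det_mul, Matrix.det_conjTranspose]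
  have hdet : (g.submatrix (Fin.castLE hs) (Fin.castLE hs)).det
      = ∏ i : Fin s, g (Fin.castLE hs i) (Fin.castLE hs i) := by
    apply Matrix.det_of_upperTriangular
    intro i j hij
    have hji : (j : ℕ) < (i : ℕ) := hij
    refine hg _ _ ?_
    rw [Fin.lt_def]
    simpa using hji
  rw [hdet, ← map_prod Complex.normSq]
  rw [show (star (∏ i : Fin s, g (Fin.castLE hs i) (Fin.castLE hs i))
      * ∏ i : Fin s, g (Fin.castLE hs i) (Fin.castLE hs i))
      = ((Complex.normSq (∏ i : Fin s, g (Fin.castLE hs i) (Fin.castLE hs i)) : ℝ) : ℂ) from by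
    rw [mul_comm, Complex.star_def, Complex.mul_conj]]
  exact Complex.ofReal_re _

/-- The triangular matrix used in the second kernel argument. -/
def hmat {n : ℕ} (k : Fin n) (t : ℝ) (x : Fin n → ℂ) : Matrix (Fin n) (Fin n) ℂ :=
  Matrix.of fun a b => if b = k then (t : ℂ) * x a else if a = b then 1 else 0

lemma hmat_ut {n : ℕ} (k : Fin n) (t : ℝ) (x : Fin n → ℂ)
    (hsupp : ∀ j, k < j → x j = 0) : UT (hmat k t x) := by
  intro i j hij
  simp only [hmat, Matrix.of_apply]
  by_cases hjk : j = k
  · subst hjk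
    rw [if_pos rfl, hsupp i hij, mul_zero]
  · rw [if_neg hjk, if_neg hij.ne']

lemma hmat_det {n : ℕ} (k : Fin n) (t : ℝ) (x : Fin n → ℂ)
    (hsupp : ∀ j, k < j → x j = 0) :
    (hmat k t x).det = (t : ℂ) * x k := by
  rw [Matrix.det_of_upperTriangular (fun i j hij => hmat_ut k t x hsupp i j hij)]
  rw [Finset.prod_eq_single k]
  · simp [hmat]
  · intro b _ hb
    simp [hmat, hb]
  · simp

lemma sum_mulVec' {κ ι : Type*} [Fintype κ] [Fintype ι] {r : ℕ}
    (M : Fin r → Matrix κ ι ℂ) (v : ι → ℂ) :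
    (∑ i, M i) *ᵥ v = ∑ i, (M i) *ᵥ v := by
  ext a
  simp only [Matrix.mulVec, dotProduct, Finset.sum_apply, Finset.sum_mul,
    Matrix.sum_apply]
  rw [Finset.sum_comm]

lemma dot_sum {κ : Type*} [Fintype κ] {r : ℕ} (v : κ → ℂ) (w : Fin r → κ → ℂ) :
    v ⬝ᵥ (∑ i, w i) = ∑ i, v ⬝ᵥ w i := by
  simp only [dotProduct, Finset.sum_apply, Finset.mul_sum]
  rw [Finset.sum_comm]

lemma hmat_hDh {n : ℕ} (k : Fin n) (t : ℝ) (x : Fin n → ℂ) (p : Fin n → ℝ) :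
    hmat k t x * Matrix.diagonal (fun j => (p j : ℂ)) * (hmat k t x)ᴴ
      = Matrix.diagonal (fun j => if j = k then 0 else (p j : ℂ))
        + ((t ^ 2 * p k : ℝ) : ℂ) • Matrix.vecMulVec x (star x) := by
  ext a c
  rw [Matrix.mul_apply]
  simp only [Matrix.mul_diagonal, Matrix.conjTranspose_apply]
  rw [← Finset.add_sum_erase Finset.univ _ (Finset.mem_univ k)]
  have hterm : hmat k t x a k * (p k : ℂ) * star (hmat k t x c k)
      = ((t ^ 2 * p k : ℝ) : ℂ) * (x a * star (x c)) := by
    simp only [hmat, Matrix.of_apply, eq_self_iff_true, if_true]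
    rw [Complex.star_def, _root_.map_mul, Complex.conj_ofReal]
    push_cast
    ring
  have hrest : (∑ b ∈ Finset.univ.erase k,
      hmat k t x a b * (p b : ℂ) * star (hmat k t x c b))
      = Matrix.diagonal (fun j => if j = k then 0 else (p j : ℂ)) a c := by
    by_cases hac : a = c
    · subst hac
      by_cases hak : a = k
      · rw [Finset.sum_eq_zero, Matrix.diagonal_apply_eq]
        · rw [if_pos hak]
        · intro b hb
          have hbk : b ≠ k := (Finset.mem_erase.mp hb).1
          have hab : ¬ a = b := fun h => hbk (h ▸ hak)
          simp [hmat, hbk, hab]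
      · rw [Finset.sum_eq_single_of_mem a
          (Finset.mem_erase.mpr ⟨hak, Finset.mem_univ a⟩), Matrix.diagonal_apply_eq]
        · simp [hmat, hak]
        · intro b hb hba
          have hbk : b ≠ k := (Finset.mem_erase.mp hb).1
          simp [hmat, hbk, Ne.symm hba]
    · rw [Finset.sum_eq_zero, Matrix.diagonal_apply_ne _ hac]
      intro b hb
      have hbk : b ≠ k := (Finset.mem_erase.mp hb).1
      by_cases hab : a = b
      · have hcb : ¬ c = b := fun h => hac (hab.trans h.symm)
        simp [hmat, hbk, hcb]
      · simp [hmat, hbk, hab]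
  rw [hterm, hrest]
  simp only [Matrix.add_apply, Matrix.smul_apply, Matrix.vecMulVec_apply, smul_eq_mul,
    Pi.star_apply]
  ring

lemma cpMap_hmat {n m r : ℕ} (A : Fin r → Matrix (Fin m) (Fin n) ℂ) (k : Fin n) (t : ℝ)
    (x : Fin n → ℂ) (p : Fin n → ℝ) (hx : ∀ i, A i *ᵥ x = 0) :
    cpMap A (hmat k t x * Matrix.diagonal (fun j => (p j : ℂ)) * (hmat k t x)ᴴ)
      = cpMap A (Matrix.diagonal (fun j => if j = k then 0 else (p j : ℂ))) := by
  rw [hmat_hDh]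
  unfold cpMap
  refine Finset.sum_congr rfl fun i _ => ?_
  have hAv : A i * Matrix.vecMulVec x (star x) = 0 := by
    ext a b
    rw [Matrix.mul_apply]
    simp only [Matrix.vecMulVec_apply, Matrix.zero_apply, Pi.star_apply]
    have h1 : (∑ c, A i a c * (x c * star (x b)))
        = (∑ c, A i a c * x c) * star (x b) := by
      rw [Finset.sum_mul]
      exact Finset.sum_congr rfl fun c _ => (mul_assoc _ _ _).symm
    have h2 : (∑ c, A i a c * x c) = 0 := by
      have := congrFun (hx i) a
      simpa [Matrix.mulVec, dotProduct] using this
    rw [h1, h2, zero_mul]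
  rw [Matrix.mul_add, Matrix.mul_smul, hAv, smul_zero, add_zero]

lemma hmat_den {n : ℕ} (k : Fin n) (t : ℝ) (x : Fin n → ℂ) (p : Fin n → ℝ)
    (hsupp : ∀ j, k < j → x j = 0) :
    relDet p ((hmat k t x)ᴴ * hmat k t x)
      = ∏ j : Fin n, (if (k : ℕ) < (j : ℕ) + 1
          then t ^ 2 * Complex.normSq (x k) else 1) ^ delta p j := by
  unfold relDet
  refine Finset.prod_congr rfl fun j _ => ?_
  rw [minor_det_re (Nat.succ_le_of_lt j.isLt) (hmat_ut k t x hsupp)]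
  congr 1
  by_cases hk : (k : ℕ) < (j : ℕ) + 1
  · rw [if_pos hk, Finset.prod_eq_single (⟨(k : ℕ), hk⟩ : Fin ((j : ℕ) + 1))]
    · have hck : Fin.castLE (Nat.succ_le_of_lt j.isLt)
          (⟨(k : ℕ), hk⟩ : Fin ((j : ℕ) + 1)) = k := Fin.ext rfl
      rw [hck]
      simp [hmat, Complex.normSq_mul, Complex.normSq_ofReal, sq]
    · intro b _ hb
      have hbk : Fin.castLE (Nat.succ_le_of_lt j.isLt) b ≠ k := by
        intro h
        exact hb (Fin.ext (by simpa using congrArg Fin.val h))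
      simp [hmat, hbk]
    · simp
  · rw [if_neg hk, Finset.prod_eq_one]
    intro b _
    have hblt : (b : ℕ) < (j : ℕ) + 1 := b.isLt
    have hbk : Fin.castLE (Nat.succ_le_of_lt j.isLt) b ≠ k := by
      intro h
      have hb := congrArg Fin.val h
      simp only [Fin.coe_castLE] at hb
      omega
    simp [hmat, hbk]

lemma cap_le_of_left_kernel {n m r : ℕ} (hm : 0 < m)
    (A : Fin r → Matrix (Fin m) (Fin n) ℂ) (p : Fin n → ℝ) (q : Fin m → ℝ)
    (hp0 : ∀ j, 0 ≤ p j)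
    (hqm : 0 < q ⟨m - 1, Nat.sub_lt hm Nat.one_pos⟩)
    (y : Fin m → ℂ) (hy : y ≠ 0) (hAy : ∀ i, (A i)ᴴ *ᵥ y = 0) :
    cap A p q ≤ 0 := by
  unfold cap
  refine csInf_le ⟨0, fun x hx => capSet_nonneg A hp0 x hx⟩ ?_
  refine ⟨1, by simp, fun i j hij => Matrix.one_apply_ne hij.ne', ?_⟩
  rw [Matrix.conjTranspose_one, Matrix.one_mul, Matrix.mul_one, Matrix.one_mul]
  have hnum : relDet q (cpMap A (Matrix.diagonal fun j => (p j : ℂ))) = 0 := by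
    unfold relDet
    apply Finset.prod_eq_zero
      (Finset.mem_univ (⟨m - 1, Nat.sub_lt hm Nat.one_pos⟩ : Fin m))
    have hMy : cpMap A (Matrix.diagonal fun j => (p j : ℂ)) *ᵥ y = 0 := by
      unfold cpMap
      rw [sum_mulVec']
      refine Finset.sum_eq_zero fun i _ => ?_
      rw [← Matrix.mulVec_mulVec, hAy i, Matrix.mulVec_zero]
    rw [compress_det_zero hy hMy (by show m - 1 + 1 = m; omega)]
    have hd : delta q (⟨m - 1, Nat.sub_lt hm Nat.one_pos⟩ : Fin m)
        = q ⟨m - 1, Nat.sub_lt hm Nat.one_pos⟩ := by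
      unfold delta
      rw [dif_neg (by show ¬ (m - 1 + 1 < m); omega)]
      ring
    rw [hd, Complex.zero_re, Real.zero_rpow (ne_of_gt hqm)]
  rw [hnum, zero_div]

lemma not_cap_pos_of_right_kernel {n m r : ℕ} (hn : 0 < n)
    (A : Fin r → Matrix (Fin m) (Fin n) ℂ) (p : Fin n → ℝ) (q : Fin m → ℝ)
    (hp : Antitone p) (hp0 : ∀ j, 0 ≤ p j)
    (hpn : 0 < p ⟨n - 1, Nat.sub_lt hn Nat.one_pos⟩)
    (x : Fin n → ℂ) (hx0 : x ≠ 0) (hx : ∀ i, A i *ᵥ x = 0)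
    (hcap : 0 < cap A p q) : False := by
  classical
  -- the largest index where x is nonzero
  have hne : (Finset.univ.filter fun j : Fin n => x j ≠ 0).Nonempty := by
    obtain ⟨j, hj⟩ := Function.ne_iff.mp hx0
    exact ⟨j, Finset.mem_filter.mpr ⟨Finset.mem_univ j, hj⟩⟩
  set k := (Finset.univ.filter fun j : Fin n => x j ≠ 0).max' hne with hkdef
  have hxk : x k ≠ 0 :=
    (Finset.mem_filter.mp
      ((Finset.univ.filter fun j : Fin n => x j ≠ 0).max'_mem hne)).2
  have hsupp : ∀ j, k < j → x j = 0 := by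
    intro j hj
    by_contra hxj
    have : j ≤ k := Finset.le_max' _ j (Finset.mem_filter.mpr ⟨Finset.mem_univ j, hxj⟩)
    exact absurd hj (not_lt.mpr this)
  -- the (constant) numerator
  set N := relDet q (cpMap A (Matrix.diagonal fun j => if j = k then 0 else (p j : ℂ)))
    with hNdef
  have hdiagpsd : (Matrix.diagonal fun j => if j = k then 0 else (p j : ℂ)).PosSemidef := by
    refine Matrix.posSemidef_diagonal_iff.mpr fun j => ?_
    split
    · exact le_refl 0
    · exact Complex.zero_le_real.mpr (hp0 j)
  have hN : 0 ≤ N := relDet_nonneg _ (cpMap_psd A hdiagpsd)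
  set pm := p ⟨n - 1, Nat.sub_lt hn Nat.one_pos⟩ with hpmdef
  -- choose the scale
  set s0 : ℝ := max 1 ((N / cap A p q + 1) ^ (pm⁻¹)) with hs0def
  have hs0 : 1 ≤ s0 := le_max_left _ _
  have hbase : (0 : ℝ) ≤ N / cap A p q + 1 := by positivity
  have hs0pow : N / cap A p q < s0 ^ pm := by
    have h1 : ((N / cap A p q + 1) ^ (pm⁻¹)) ^ pm = N / cap A p q + 1 :=
      Real.rpow_inv_rpow hbase (ne_of_gt hpn)
    have h2 : ((N / cap A p q + 1) ^ (pm⁻¹)) ^ pm ≤ s0 ^ pm :=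
      Real.rpow_le_rpow (Real.rpow_nonneg hbase _) (le_max_right _ _) (le_of_lt hpn)
    have h3 : N / cap A p q < N / cap A p q + 1 := by linarith
    calc N / cap A p q < N / cap A p q + 1 := h3
      _ = _ := h1.symm
      _ ≤ s0 ^ pm := h2
  have hnsq : 0 < Complex.normSq (x k) := Complex.normSq_pos.mpr hxk
  set t : ℝ := Real.sqrt (s0 / Complex.normSq (x k)) with htdef
  have ht : 0 < t := Real.sqrt_pos.mpr (by positivity)
  have ht2 : t ^ 2 * Complex.normSq (x k) = s0 := by
    rw [htdef, Real.sq_sqrt (by positivity)]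
    field_simp
  -- the denominator is large
  set den := relDet p ((hmat k t x)ᴴ * hmat k t x) with hdendef
  have hden : s0 ^ pm ≤ den := by
    rw [hdendef, hmat_den k t x p hsupp]
    have hfac : ∀ j : Fin n, (1 : ℝ) ≤ (if (k : ℕ) < (j : ℕ) + 1
        then t ^ 2 * Complex.normSq (x k) else 1) ^ delta p j := by
      intro j
      have hb : (1 : ℝ) ≤ (if (k : ℕ) < (j : ℕ) + 1
          then t ^ 2 * Complex.normSq (x k) else 1) := by
        split
        · rw [ht2]; exact hs0
        · exact le_refl 1
      calc (1 : ℝ) = 1 ^ delta p j := (Real.one_rpow _).symm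
        _ ≤ _ := Real.rpow_le_rpow zero_le_one hb (delta_nonneg hp hp0 j)
    have hlastfac : (if (k : ℕ) < ((⟨n - 1, Nat.sub_lt hn Nat.one_pos⟩ : Fin n) : ℕ) + 1
        then t ^ 2 * Complex.normSq (x k) else 1)
          ^ delta p (⟨n - 1, Nat.sub_lt hn Nat.one_pos⟩ : Fin n) = s0 ^ pm := by
      rw [if_pos (by show (k : ℕ) < n - 1 + 1; have := k.isLt; omega), ht2]
      congr 1
      unfold delta
      rw [dif_neg (by show ¬ (n - 1 + 1 < n); omega)]
      simp [hpmdef]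
    have hprod : (∏ j : Fin n,
          (if j = (⟨n - 1, Nat.sub_lt hn Nat.one_pos⟩ : Fin n) then s0 ^ pm else 1))
        ≤ ∏ j : Fin n, (if (k : ℕ) < (j : ℕ) + 1
            then t ^ 2 * Complex.normSq (x k) else 1) ^ delta p j := by
      apply Finset.prod_le_prod
      · intro j _
        split
        · exact le_of_lt (Real.rpow_pos_of_pos (lt_of_lt_of_le one_pos hs0) pm)
        · exact zero_le_one
      · intro j _
        by_cases hj : j = (⟨n - 1, Nat.sub_lt hn Nat.one_pos⟩ : Fin n)
        · rw [if_pos hj, hj, hlastfac]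
        · rw [if_neg hj]
          exact hfac j
    rw [Finset.prod_ite_eq' Finset.univ _ (fun _ => s0 ^ pm)] at hprod
    simpa using hprod
  -- conclude
  have hs0p : 0 < s0 ^ pm := Real.rpow_pos_of_pos (lt_of_lt_of_le one_pos hs0) pm
  have hut := hmat_ut k t x hsupp
  have hunit : IsUnit (hmat k t x).det := by
    rw [hmat_det k t x hsupp]
    exact isUnit_iff_ne_zero.mpr
      (mul_ne_zero (Complex.ofReal_ne_zero.mpr (ne_of_gt ht)) hxk)
  have hcap_le : cap A p q ≤ N / den := by
    unfold cap
    refine csInf_le ⟨0, fun v hv => capSet_nonneg A hp0 v hv⟩ ?_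
    exact ⟨hmat k t x, hunit, hut, by rw [cpMap_hmat A k t x p hx]⟩
  have h2 : N / den ≤ N / s0 ^ pm := div_le_div_of_nonneg_left hN hs0p hden
  have h3 : N / s0 ^ pm < cap A p q := by
    rw [div_lt_iff₀ hs0p]
    have := (div_lt_iff₀ hcap).mp hs0pow
    linarith
  linarith [hcap_le.trans h2]

end ProofAux

/-- Lemma (nonsingularity): if `P, Q` are invertible and `cap(T,P,Q) > 0`, then `T` and `T*`
map positive definite matrices to positive definite matrices. -/
theorem stmt10 {n m r : ℕ} (hn : 0 < n) (hm : 0 < m)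
    (A : Fin r → Matrix (Fin m) (Fin n) ℂ)
    (p : Fin n → ℝ) (q : Fin m → ℝ)
    (hp : Antitone p) (hp0 : ∀ j, 0 ≤ p j) (hq : Antitone q) (hq0 : ∀ i, 0 ≤ q i)
    (hpn : 0 < p ⟨n - 1, Nat.sub_lt hn Nat.one_pos⟩)
    (hqm : 0 < q ⟨m - 1, Nat.sub_lt hm Nat.one_pos⟩)
    (hcap : 0 < cap A p q) :
    (∀ X : Matrix (Fin n) (Fin n) ℂ, X.PosDef → (cpMap A X).PosDef) ∧
    (∀ Y : Matrix (Fin m) (Fin m) ℂ, Y.PosDef → (cpDual A Y).PosDef) := by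
  have key1 : ∀ y : Fin m → ℂ, y ≠ 0 → ∃ i, (A i)ᴴ *ᵥ y ≠ 0 := by
    intro y hy
    by_contra hcon
    push_neg at hcon
    have := ProofAux.cap_le_of_left_kernel hm A p q hp0 hqm y hy hcon
    linarith
  have key2 : ∀ x : Fin n → ℂ, x ≠ 0 → ∃ i, A i *ᵥ x ≠ 0 := by
    intro x hx0
    by_contra hcon
    push_neg at hcon
    exact ProofAux.not_cap_pos_of_right_kernel hn A p q hp hp0 hpn x hx0 hcon hcap
  constructor
  · intro X hX
    have hpsd := ProofAux.cpMap_psd A hX.posSemidef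
    refine Matrix.posDef_iff_dotProduct_mulVec.mpr ⟨hpsd.isHermitian, fun y hy => ?_⟩
    rcases key1 y hy with ⟨i0, hi0⟩
    have hsum : star y ⬝ᵥ cpMap A X *ᵥ y
        = ∑ i, star ((A i)ᴴ *ᵥ y) ⬝ᵥ X *ᵥ ((A i)ᴴ *ᵥ y) := by
      unfold cpMap
      rw [ProofAux.sum_mulVec', ProofAux.dot_sum]
      exact Finset.sum_congr rfl fun i _ => ProofAux.quad_form m n (A i) X y
    rw [hsum]
    have hterm : ∀ i, 0 ≤ star ((A i)ᴴ *ᵥ y) ⬝ᵥ X *ᵥ ((A i)ᴴ *ᵥ y) := fun i =>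
      hX.posSemidef.dotProduct_mulVec_nonneg _
    exact lt_of_lt_of_le (hX.dotProduct_mulVec_pos hi0)
      (Finset.single_le_sum (fun i _ => hterm i) (Finset.mem_univ i0))
  · intro Y hY
    have hpsd : (cpDual A Y).PosSemidef := by
      unfold cpDual
      refine Finset.sum_induction _ _ (fun a b ha hb => ha.add hb)
        Matrix.PosSemidef.zero ?_
      intro i _
      have := hY.posSemidef.conjTranspose_mul_mul_same (A i)
      simpa using this
    refine Matrix.posDef_iff_dotProduct_mulVec.mpr ⟨hpsd.isHermitian, fun x hx => ?_⟩
    rcases key2 x hx with ⟨i0, hi0⟩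
    have hsum : star x ⬝ᵥ cpDual A Y *ᵥ x
        = ∑ i, star (A i *ᵥ x) ⬝ᵥ Y *ᵥ (A i *ᵥ x) := by
      unfold cpDual
      rw [ProofAux.sum_mulVec', ProofAux.dot_sum]
      refine Finset.sum_congr rfl fun i _ => ?_
      have := ProofAux.quad_form n m (A i)ᴴ Y x
      rw [Matrix.conjTranspose_conjTranspose] at this
      exact this
    rw [hsum]
    have hterm : ∀ i, 0 ≤ star (A i *ᵥ x) ⬝ᵥ Y *ᵥ (A i *ᵥ x) := fun i =>
      hY.posSemidef.dotProduct_mulVec_nonneg _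
    exact lt_of_lt_of_le (hY.dotProduct_mulVec_pos hi0)
      (Finset.single_le_sum (fun i _ => hterm i) (Finset.mem_univ i0))
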